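/- arXiv:1905.05427 — 2 statements merged into one kernel-verified Lean document; each statement's English description precedes it below -/
import Mathlib

section
/- Define t : (0,∞) → (0,∞) by t(s) = 2·arsinh(1/(2·sinh(s/2))), and define H(s) = (s·tanh(s/2)) / (t(s)·tanh(t(s)/2)). Then H is strictly monotone increasing on (0,∞) and its range is all of (0,∞). In particular, for every M ∈ (0,∞) there is a unique s > 0 with H(s) = M. -/
noncomputable def tFun (s : ℝ) : ℝ := 2 * Real.arsinh (1 / (2 * Real.sinh (s / 2)))

noncomputable def HFun (s : ℝ) : ℝ :=
  (s * Real.tanh (s / 2)) / (tFun s * Real.tanh (tFun s / 2))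

open Real Set

lemma my_tanh_lt {a b : ℝ} (h : a < b) : Real.tanh a < Real.tanh b := by
  rw [Real.tanh_eq_sinh_div_cosh, Real.tanh_eq_sinh_div_cosh,
    div_lt_div_iff₀ (Real.cosh_pos a) (Real.cosh_pos b)]
  have h1 := Real.sinh_sub b a
  have h2 : 0 < Real.sinh (b - a) := Real.sinh_pos_iff.2 (by linarith)
  linarith

lemma my_tanh_pos {x : ℝ} (hx : 0 < x) : 0 < Real.tanh x := by
  simpa using my_tanh_lt hx

noncomputable def fF (s : ℝ) : ℝ := s * Real.tanh (s / 2)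

lemma fF_pos {s : ℝ} (hs : 0 < s) : 0 < fF s :=
  mul_pos hs (my_tanh_pos (by linarith))

lemma fF_lt {a b : ℝ} (ha : 0 < a) (hab : a < b) : fF a < fF b := by
  have h1 : Real.tanh (a / 2) < Real.tanh (b / 2) := my_tanh_lt (by linarith)
  have h2 : 0 < Real.tanh (a / 2) := my_tanh_pos (by linarith)
  have := mul_lt_mul'' hab h1 ha.le h2.le
  exact this

lemma sinh_half_pos {s : ℝ} (hs : 0 < s) : 0 < Real.sinh (s / 2) :=
  Real.sinh_pos_iff.2 (by linarith)

lemma tFun_pos {s : ℝ} (hs : 0 < s) : 0 < tFun s := by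
  have h := sinh_half_pos hs
  have : (0 : ℝ) < 1 / (2 * Real.sinh (s / 2)) := by positivity
  have := Real.arsinh_pos_iff.2 this
  unfold tFun; linarith

lemma tFun_anti {a b : ℝ} (ha : 0 < a) (hab : a < b) : tFun b < tFun a := by
  have h1 : Real.sinh (a / 2) < Real.sinh (b / 2) := Real.sinh_lt_sinh.2 (by linarith)
  have h2 := sinh_half_pos ha
  have h3 : 1 / (2 * Real.sinh (b / 2)) < 1 / (2 * Real.sinh (a / 2)) := by
    apply one_div_lt_one_div_of_lt (by linarith) (by linarith)
  have := Real.arsinh_lt_arsinh.2 h3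
  unfold tFun; linarith

lemma sinh_tFun_half {s : ℝ} (hs : 0 < s) :
    Real.sinh (tFun s / 2) = 1 / (2 * Real.sinh (s / 2)) := by
  unfold tFun
  rw [mul_div_cancel_left₀ _ (two_ne_zero), Real.sinh_arsinh]

lemma tFun_tFun {s : ℝ} (hs : 0 < s) : tFun (tFun s) = s := by
  have h := sinh_half_pos hs
  have h2 : Real.sinh (tFun s / 2) = 1 / (2 * Real.sinh (s / 2)) := sinh_tFun_half hs
  have h0 : tFun (tFun s) = 2 * Real.arsinh (1 / (2 * Real.sinh (tFun s / 2))) := rfl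
  rw [h0, h2]
  have h3 : 1 / (2 * (1 / (2 * Real.sinh (s / 2)))) = Real.sinh (s / 2) := by
    field_simp
  rw [h3, Real.arsinh_sinh]
  ring

lemma HFun_eq (s : ℝ) : HFun s = fF s / fF (tFun s) := rfl

lemma HFun_pos {s : ℝ} (hs : 0 < s) : 0 < HFun s :=
  div_pos (fF_pos hs) (fF_pos (tFun_pos hs))

lemma HFun_mono : StrictMonoOn HFun (Set.Ioi (0 : ℝ)) := by
  intro a ha b hb hab
  simp only [Set.mem_Ioi] at ha hb
  rw [HFun_eq, HFun_eq]
  have h1 : fF a < fF b := fF_lt ha hab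
  have h2 : fF (tFun b) < fF (tFun a) := fF_lt (tFun_pos hb) (tFun_anti ha hab)
  have p1 := fF_pos ha
  have p3 := fF_pos (tFun_pos hb)
  have p2 := fF_pos (tFun_pos ha)
  rw [div_lt_div_iff₀ p2 p3]
  nlinarith

lemma HFun_tFun {s : ℝ} (hs : 0 < s) : HFun (tFun s) = (HFun s)⁻¹ := by
  rw [HFun_eq, HFun_eq, tFun_tFun hs, inv_div]

lemma tFun_continuousOn : ContinuousOn tFun (Set.Ioi (0 : ℝ)) := by
  unfold tFun
  apply ContinuousOn.mul continuousOn_const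
  apply ContinuousOn.arsinh
  apply ContinuousOn.div continuousOn_const
  · fun_prop
  · intro x hx
    have := sinh_half_pos (Set.mem_Ioi.1 hx)
    positivity

lemma my_continuous_tanh : Continuous Real.tanh := by
  have h : Real.tanh = fun x => Real.sinh x / Real.cosh x :=
    funext fun x => Real.tanh_eq_sinh_div_cosh x
  rw [h]
  exact Real.continuous_sinh.div Real.continuous_cosh fun x => (Real.cosh_pos x).ne'

lemma fF_continuous : Continuous fF := by
  unfold fF
  exact continuous_id.mul (my_continuous_tanh.comp (continuous_id.div_const 2))

lemma HFun_continuousOn : ContinuousOn HFun (Set.Ioi (0 : ℝ)) := by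
  have h1 : ContinuousOn (fun s => fF (tFun s)) (Set.Ioi (0 : ℝ)) :=
    fF_continuous.comp_continuousOn tFun_continuousOn
  have : ContinuousOn (fun s => fF s / fF (tFun s)) (Set.Ioi (0 : ℝ)) := by
    apply ContinuousOn.div fF_continuous.continuousOn h1
    intro x hx
    exact (fF_pos (tFun_pos (Set.mem_Ioi.1 hx))).ne'
  exact this

lemma HFun_large (K : ℝ) : ∃ b : ℝ, 0 < b ∧ K < HFun b := by
  rcases le_or_gt K 0 with hK | hK
  · exact ⟨1, one_pos, lt_of_le_of_lt hK (HFun_pos one_pos)⟩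
  set c := Real.tanh (1 / 2) with hc
  have hcpos : 0 < c := my_tanh_pos (by norm_num)
  set D := fF (tFun 1) with hD
  have hDpos : 0 < D := fF_pos (tFun_pos one_pos)
  set b := max 1 (K * D / c + 1) with hb
  refine ⟨b, lt_of_lt_of_le one_pos (le_max_left _ _), ?_⟩
  have hb1 : 1 ≤ b := le_max_left _ _
  have hb2 : K * D / c + 1 ≤ b := le_max_right _ _
  have hbpos : (0 : ℝ) < b := by linarith
  -- fF (tFun b) ≤ D
  have htle : fF (tFun b) ≤ D := by
    rcases eq_or_lt_of_le hb1 with h | h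
    · rw [← h]
    · exact (fF_lt (tFun_pos hbpos) (tFun_anti one_pos h)).le
  have htpos : 0 < fF (tFun b) := fF_pos (tFun_pos hbpos)
  -- fF b ≥ b * c
  have hfb : b * c ≤ fF b := by
    unfold fF
    have : c ≤ Real.tanh (b / 2) := by
      rcases eq_or_lt_of_le hb1 with h | h
      · rw [← h]
      · exact (my_tanh_lt (by linarith)).le
    nlinarith
  have hKD : K * D < b * c := by
    have : K * D / c < b := by linarith
    calc K * D = (K * D / c) * c := by field_simp
    _ < b * c := by nlinarith
  rw [HFun_eq, lt_div_iff₀ htpos]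
  have hK1 : K * fF (tFun b) ≤ K * D := by nlinarith
  linarith

lemma HFun_surj {M : ℝ} (hM : 0 < M) : ∃ s : ℝ, 0 < s ∧ HFun s = M := by
  obtain ⟨b, hb, hMb⟩ := HFun_large M
  obtain ⟨b', hb', hMb'⟩ := HFun_large M⁻¹
  set a := tFun b' with ha
  have hapos : 0 < a := tFun_pos hb'
  have haM : HFun a < M := by
    rw [ha, HFun_tFun hb']
    have := inv_strictAnti₀ (inv_pos.2 hM) hMb'
    simpa using this
  have hsub : Set.uIcc a b ⊆ Set.Ioi (0 : ℝ) := by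
    intro x hx
    rw [Set.mem_uIcc] at hx
    rcases hx with ⟨h1, _⟩ | ⟨h1, _⟩ <;> simp only [Set.mem_Ioi] <;> linarith
  have hM' : M ∈ Set.uIcc (HFun a) (HFun b) := by
    rw [Set.mem_uIcc]
    exact Or.inl ⟨haM.le, hMb.le⟩
  obtain ⟨s, hs, hEq⟩ := intermediate_value_uIcc (HFun_continuousOn.mono hsub) hM'
  exact ⟨s, hsub hs, hEq⟩

theorem stmt_2 :
    StrictMonoOn HFun (Set.Ioi (0 : ℝ)) ∧
    HFun '' Set.Ioi (0 : ℝ) = Set.Ioi (0 : ℝ) ∧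
    ∀ M : ℝ, 0 < M → ∃! s : ℝ, 0 < s ∧ HFun s = M := by
  refine ⟨HFun_mono, ?_, ?_⟩
  · ext M
    simp only [Set.mem_image, Set.mem_Ioi]
    constructor
    · rintro ⟨s, hs, rfl⟩; exact HFun_pos hs
    · intro hM
      obtain ⟨s, h1, h2⟩ := HFun_surj hM
      exact ⟨s, h1, h2⟩
  · intro M hM
    obtain ⟨s, h1, h2⟩ := HFun_surj hM
    refine ⟨s, ⟨h1, h2⟩, ?_⟩
    rintro y ⟨hy1, hy2⟩
    exact HFun_mono.injOn (Set.mem_Ioi.2 hy1) (Set.mem_Ioi.2 h1) (hy2.trans h2.symm)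
end

section
/- Let m_c, m_d > 0. The function F(s, t) = m_d·s² + m_c·t² restricted to the constraint set {(s,t) ∈ (0,∞)² : sinh(s/2)·sinh(t/2) = 1/2} attains a minimum, and the minimizer is unique. -/
open Real Set

private lemma ratio_lt_ratio {a b : ℝ} (ha : 0 < a) (hab : a < b) :
    a * (Real.sqrt (1 + a ^ 2))⁻¹ < b * (Real.sqrt (1 + b ^ 2))⁻¹ := by
  have h1 : a * Real.sqrt (1 + b ^ 2) < b * Real.sqrt (1 + a ^ 2) := by
    have e1 : a * Real.sqrt (1 + b ^ 2) = Real.sqrt (a ^ 2 * (1 + b ^ 2)) := by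
      rw [Real.sqrt_mul (sq_nonneg a), Real.sqrt_sq ha.le]
    have e2 : b * Real.sqrt (1 + a ^ 2) = Real.sqrt (b ^ 2 * (1 + a ^ 2)) := by
      rw [Real.sqrt_mul (sq_nonneg b), Real.sqrt_sq (ha.trans hab).le]
    rw [e1, e2]
    apply Real.sqrt_lt_sqrt (by positivity)
    nlinarith
  have hsa : (0:ℝ) < Real.sqrt (1 + a ^ 2) := Real.sqrt_pos.mpr (by positivity)
  have hsb : (0:ℝ) < Real.sqrt (1 + b ^ 2) := Real.sqrt_pos.mpr (by positivity)
  rw [← div_eq_mul_inv, ← div_eq_mul_inv, div_lt_div_iff₀ hsa hsb]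
  linarith

private lemma lemA (k c : ℝ) (hk : 0 < k) (hc : 0 < c) :
    StrictConvexOn ℝ Set.univ (fun w => k * Real.arsinh (c * Real.exp w) ^ 2) := by
  have hd : ∀ w : ℝ, HasDerivAt (fun w => k * Real.arsinh (c * Real.exp w) ^ 2)
      (k * (2 * Real.arsinh (c * Real.exp w) *
        (c * Real.exp w * (Real.sqrt (1 + (c * Real.exp w) ^ 2))⁻¹))) w := by
    intro w
    have h1 : HasDerivAt (fun w => c * Real.exp w) (c * Real.exp w) w :=
      (Real.hasDerivAt_exp w).const_mul c
    have h2 : HasDerivAt (fun w => Real.arsinh (c * Real.exp w))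
        ((Real.sqrt (1 + (c * Real.exp w) ^ 2))⁻¹ * (c * Real.exp w)) w :=
      (Real.hasDerivAt_arsinh _).comp w h1
    have h3 := (h2.pow 2).const_mul k
    exact h3.congr_deriv (by push_cast; ring)
  apply StrictMono.strictConvexOn_univ_of_deriv
  · exact continuous_const.mul
      ((Real.continuous_arsinh.comp (continuous_const.mul Real.continuous_exp)).pow 2)
  · have hderiv : deriv (fun w => k * Real.arsinh (c * Real.exp w) ^ 2)
        = fun w => k * (2 * Real.arsinh (c * Real.exp w) *
          (c * Real.exp w * (Real.sqrt (1 + (c * Real.exp w) ^ 2))⁻¹)) :=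
      funext fun w => (hd w).deriv
    rw [hderiv]
    intro x y hxy
    simp only
    have hux : 0 < c * Real.exp x := by positivity
    have huxy : c * Real.exp x < c * Real.exp y :=
      mul_lt_mul_of_pos_left (Real.exp_lt_exp.mpr hxy) hc
    have hA1 : 0 < Real.arsinh (c * Real.exp x) := Real.arsinh_pos_iff.mpr hux
    have hA : Real.arsinh (c * Real.exp x) < Real.arsinh (c * Real.exp y) :=
      Real.arsinh_lt_arsinh.mpr huxy
    have hB1 : 0 < c * Real.exp x * (Real.sqrt (1 + (c * Real.exp x) ^ 2))⁻¹ := by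
      have hs : (0:ℝ) < Real.sqrt (1 + (c * Real.exp x) ^ 2) :=
        Real.sqrt_pos.mpr (by positivity)
      positivity
    have hB := ratio_lt_ratio hux huxy
    have h := mul_lt_mul'' hA hB hA1.le hB1.le
    nlinarith

private lemma strictConvexOn_comp_neg {f : ℝ → ℝ} (hf : StrictConvexOn ℝ Set.univ f) :
    StrictConvexOn ℝ Set.univ (fun w => f (-w)) := by
  refine ⟨convex_univ, fun x _ y _ hxy a b ha hb hab => ?_⟩
  have hxy' : (-x : ℝ) ≠ -y := fun h => hxy (neg_injective h)
  have h := hf.2 (Set.mem_univ (-x)) (Set.mem_univ (-y)) hxy' ha hb hab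
  have heq : a • (-x) + b • (-y) = -(a • x + b • y) := by
    simp only [smul_eq_mul]; ring
  rw [heq] at h
  simpa using h

private lemma sinh_le_exp' (x : ℝ) : Real.sinh x ≤ Real.exp x := by
  rw [Real.sinh_eq]
  nlinarith [Real.exp_pos (-x), Real.exp_pos x]

theorem stmt_3 (mc md : ℝ) (hmc : 0 < mc) (hmd : 0 < md) :
    ∃ p : ℝ × ℝ,
      (0 < p.1 ∧ 0 < p.2 ∧ Real.sinh (p.1 / 2) * Real.sinh (p.2 / 2) = 1 / 2) ∧
      (∀ q : ℝ × ℝ,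
        (0 < q.1 ∧ 0 < q.2 ∧ Real.sinh (q.1 / 2) * Real.sinh (q.2 / 2) = 1 / 2) →
        md * p.1 ^ 2 + mc * p.2 ^ 2 ≤ md * q.1 ^ 2 + mc * q.2 ^ 2) ∧
      (∀ p' : ℝ × ℝ,
        (0 < p'.1 ∧ 0 < p'.2 ∧ Real.sinh (p'.1 / 2) * Real.sinh (p'.2 / 2) = 1 / 2) →
        (∀ q : ℝ × ℝ,
          (0 < q.1 ∧ 0 < q.2 ∧ Real.sinh (q.1 / 2) * Real.sinh (q.2 / 2) = 1 / 2) →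
          md * p'.1 ^ 2 + mc * p'.2 ^ 2 ≤ md * q.1 ^ 2 + mc * q.2 ^ 2) →
        p' = p) := by
  classical
  set P : ℝ → ℝ × ℝ := fun w =>
    (2 * Real.arsinh (1 * Real.exp w), 2 * Real.arsinh ((1/2) * Real.exp (-w))) with hP
  set G : ℝ → ℝ := fun w =>
    (4 * md) * Real.arsinh (1 * Real.exp w) ^ 2
      + (4 * mc) * Real.arsinh ((1/2) * Real.exp (-w)) ^ 2 with hG
  have hGconv : StrictConvexOn ℝ Set.univ G :=
    (lemA (4 * md) 1 (by linarith) one_pos).add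
      (strictConvexOn_comp_neg (lemA (4 * mc) (1/2) (by linarith) (by norm_num)))
  have hGcont : Continuous G := by
    apply Continuous.add
    · exact continuous_const.mul
        ((Real.continuous_arsinh.comp (continuous_const.mul Real.continuous_exp)).pow 2)
    · exact continuous_const.mul
        ((Real.continuous_arsinh.comp
          (continuous_const.mul (Real.continuous_exp.comp continuous_neg))).pow 2)
  -- P w satisfies the constraint
  have hPpos : ∀ w : ℝ, 0 < (P w).1 ∧ 0 < (P w).2 ∧
      Real.sinh ((P w).1 / 2) * Real.sinh ((P w).2 / 2) = 1 / 2 := by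
    intro w
    have h1 : 0 < Real.arsinh (1 * Real.exp w) :=
      Real.arsinh_pos_iff.mpr (by positivity)
    have h2 : 0 < Real.arsinh ((1/2) * Real.exp (-w)) :=
      Real.arsinh_pos_iff.mpr (by positivity)
    refine ⟨by simp only [hP]; linarith, by simp only [hP]; linarith, ?_⟩
    simp only [hP]
    have e1 : (2 * Real.arsinh (1 * Real.exp w)) / 2 = Real.arsinh (1 * Real.exp w) := by
      ring
    have e2 : (2 * Real.arsinh ((1/2) * Real.exp (-w))) / 2
        = Real.arsinh ((1/2) * Real.exp (-w)) := by ring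
    rw [e1, e2, Real.sinh_arsinh, Real.sinh_arsinh, Real.exp_neg, one_mul]
    field_simp
  -- the energy of P w is G w
  have hFP : ∀ w : ℝ, md * (P w).1 ^ 2 + mc * (P w).2 ^ 2 = G w := by
    intro w
    simp only [hP, hG]
    ring
  -- every constraint point is P of some w
  have hPW : ∀ q : ℝ × ℝ,
      (0 < q.1 ∧ 0 < q.2 ∧ Real.sinh (q.1 / 2) * Real.sinh (q.2 / 2) = 1 / 2) →
      q = P (Real.log (Real.sinh (q.1 / 2))) := by
    rintro q ⟨hq1, hq2, hq3⟩
    set w := Real.log (Real.sinh (q.1 / 2)) with hw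
    have hs : 0 < Real.sinh (q.1 / 2) := Real.sinh_pos_iff.mpr (by linarith)
    have he : Real.exp w = Real.sinh (q.1 / 2) := Real.exp_log hs
    have h1 : (P w).1 = q.1 := by
      simp only [hP, one_mul, he, Real.arsinh_sinh]
      ring
    have hs2 : Real.sinh (q.2 / 2) = (1/2) * (Real.sinh (q.1 / 2))⁻¹ := by
      field_simp
      linear_combination 2 * hq3
    have h2 : (P w).2 = q.2 := by
      simp only [hP, Real.exp_neg, he, ← hs2, Real.arsinh_sinh]
      ring
    exact (Prod.ext h1 h2).symm
  -- coercivity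
  set m0 := G 0 with hm0
  have hGnonneg : ∀ w : ℝ, 0 ≤ G w := by
    intro w
    simp only [hG]
    positivity
  set Kd := Real.sqrt (m0 / (4 * md)) + 1 with hKd
  set Kc := Real.sqrt (m0 / (4 * mc)) + 1 with hKc
  have hKd1 : 1 ≤ Kd := le_add_of_nonneg_left (Real.sqrt_nonneg _)
  have hKc1 : 1 ≤ Kc := le_add_of_nonneg_left (Real.sqrt_nonneg _)
  set R := max Kd (Kc + Real.log 2) with hR
  have hRpos : 0 < R := lt_of_lt_of_le one_pos ((le_max_left _ _).trans' hKd1)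
  have key : ∀ w : ℝ, w ∉ Icc (-R) R → m0 < G w := by
    intro w hw
    have hm0nn : 0 ≤ m0 := hGnonneg 0
    have hRd : Kd ≤ R := le_max_left _ _
    have hRc : Kc + Real.log 2 ≤ R := le_max_right _ _
    clear_value m0 Kd Kc R
    rw [mem_Icc, not_and_or, not_le, not_le] at hw
    rcases hw with hw | hw
    · -- w < -R : the second term is large
      have h' : Kc + Real.log 2 ≤ -w := by linarith
      have harg : Real.exp Kc ≤ (1/2) * Real.exp (-w) := by
        have h := Real.exp_le_exp.mpr h'
        rw [Real.exp_add, Real.exp_log (by norm_num : (0:ℝ) < 2)] at h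
        linarith
      have harsinh : Kc ≤ Real.arsinh ((1/2) * Real.exp (-w)) := by
        calc Kc = Real.arsinh (Real.sinh Kc) := (Real.arsinh_sinh Kc).symm
          _ ≤ _ := Real.arsinh_le_arsinh.mpr ((sinh_le_exp' Kc).trans harg)
      have hsq : Kc ^ 2 ≤ Real.arsinh ((1/2) * Real.exp (-w)) ^ 2 :=
        pow_le_pow_left₀ (by linarith) harsinh 2
      have hlt : m0 < 4 * mc * Kc ^ 2 := by
        have hnn : 0 ≤ m0 / (4 * mc) := div_nonneg hm0nn (by linarith)
        have hsq2 : Real.sqrt (m0 / (4 * mc)) ^ 2 = m0 / (4 * mc) := Real.sq_sqrt hnn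
        have h4 : 4 * mc * (m0 / (4 * mc)) = m0 := by field_simp
        rw [hKc]
        nlinarith [Real.sqrt_nonneg (m0 / (4 * mc))]
      have hterm : 0 ≤ (4 * md) * Real.arsinh (1 * Real.exp w) ^ 2 := by positivity
      have hmul := mul_le_mul_of_nonneg_left hsq (by linarith : (0:ℝ) ≤ 4 * mc)
      simp only [hG]
      linarith
    · -- R < w : the first term is large
      have hwKd : Kd ≤ w := by linarith
      have harsinh : Kd ≤ Real.arsinh (1 * Real.exp w) := by
        rw [one_mul]
        calc Kd = Real.arsinh (Real.sinh Kd) := (Real.arsinh_sinh Kd).symm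
          _ ≤ _ := Real.arsinh_le_arsinh.mpr
            ((sinh_le_exp' Kd).trans (Real.exp_le_exp.mpr hwKd))
      have hsq : Kd ^ 2 ≤ Real.arsinh (1 * Real.exp w) ^ 2 :=
        pow_le_pow_left₀ (by linarith) harsinh 2
      have hlt : m0 < 4 * md * Kd ^ 2 := by
        have hnn : 0 ≤ m0 / (4 * md) := div_nonneg hm0nn (by linarith)
        have hsq2 : Real.sqrt (m0 / (4 * md)) ^ 2 = m0 / (4 * md) := Real.sq_sqrt hnn
        have h4 : 4 * md * (m0 / (4 * md)) = m0 := by field_simp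
        rw [hKd]
        nlinarith [Real.sqrt_nonneg (m0 / (4 * md))]
      have hterm : 0 ≤ (4 * mc) * Real.arsinh ((1/2) * Real.exp (-w)) ^ 2 := by positivity
      have hmul := mul_le_mul_of_nonneg_left hsq (by linarith : (0:ℝ) ≤ 4 * md)
      simp only [hG]
      linarith
  -- minimum on the compact interval
  obtain ⟨w0, hw0mem, hw0min⟩ := (isCompact_Icc (a := -R) (b := R)).exists_isMinOn
    ⟨0, by constructor <;> linarith⟩ hGcont.continuousOn
  have hglobal : ∀ w : ℝ, G w0 ≤ G w := by
    intro w
    by_cases hw : w ∈ Icc (-R) R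
    · exact hw0min hw
    · have h1 : G w0 ≤ m0 := hw0min (show (0:ℝ) ∈ Icc (-R) R by
        constructor <;> linarith)
      exact h1.trans (key w hw).le
  have hw0univ : IsMinOn G Set.univ w0 := isMinOn_iff.mpr fun w _ => hglobal w
  refine ⟨P w0, hPpos w0, ?_, ?_⟩
  · intro q hq
    have hq' := hPW q hq
    calc md * (P w0).1 ^ 2 + mc * (P w0).2 ^ 2 = G w0 := hFP w0
      _ ≤ G (Real.log (Real.sinh (q.1 / 2))) := hglobal _
      _ = md * (P (Real.log (Real.sinh (q.1 / 2)))).1 ^ 2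
          + mc * (P (Real.log (Real.sinh (q.1 / 2)))).2 ^ 2 := (hFP _).symm
      _ = md * q.1 ^ 2 + mc * q.2 ^ 2 := by rw [← hq']
  · intro p' hp' hmin
    have hp'' := hPW p' hp'
    set w' := Real.log (Real.sinh (p'.1 / 2)) with hw'
    have hFp' : md * p'.1 ^ 2 + mc * p'.2 ^ 2 = G w' := by
      rw [hp'']
      exact hFP w'
    have hGw' : ∀ w : ℝ, G w' ≤ G w := by
      intro w
      have h := hmin (P w) (hPpos w)
      rw [hFP w] at h
      linarith [hFp']
    have heqw : w' = w0 :=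
      hGconv.eq_of_isMinOn (isMinOn_iff.mpr fun w _ => hGw' w) hw0univ
        (Set.mem_univ _) (Set.mem_univ _)
    rw [hp'', heqw]
end
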